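/- Let Ω/F be a field extension and let E and F₁ be intermediate fields of Ω/F such that E/F is a finite Galois extension whose Galois group Gal(E/F) is a simple nonabelian group, and F₁/F is a finite Galois extension with solvable Galois group. Then E and F₁ are linearly disjoint over F; in particular E ∩ F₁ = F, and the restriction homomorphism from the Galois group of the compositum E·F₁ over F₁ to Gal(E/F) is a group isomorphism. -/

import Mathlib

set_option synthInstance.maxHeartbeats 1000000
set_option maxHeartbeats 4000000

open IntermediateField Polynomial Module

section AuxGeneral
variable {F Ω : Type*} [Field F] [Field Ω] [Algebra F Ω]

/-- Restriction homomorphism between automorphism groups of nested intermediate fields. -/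
noncomputable def auxRes (K K' : IntermediateField F Ω) (h : K ≤ K') [Normal F ↥K] :
    (↥K' ≃ₐ[F] ↥K') →* (↥K ≃ₐ[F] ↥K) :=
  letI : Algebra ↥K ↥K' := (IntermediateField.inclusion h).toAlgebra
  haveI : IsScalarTower F ↥K ↥K' := IsScalarTower.of_algebraMap_eq fun _ => rfl
  AlgEquiv.restrictNormalHom ↥K

theorem auxRes_surjective (K K' : IntermediateField F Ω) (h : K ≤ K')
    [Normal F ↥K] [Normal F ↥K'] : Function.Surjective (auxRes K K' h) := by
  letI : Algebra ↥K ↥K' := (IntermediateField.inclusion h).toAlgebra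
  haveI : IsScalarTower F ↥K ↥K' := IsScalarTower.of_algebraMap_eq fun _ => rfl
  exact AlgEquiv.restrictNormalHom_surjective ↥K'

theorem aux_findim (K K' : IntermediateField F Ω) (h : K ≤ K') [FiniteDimensional F ↥K'] :
    FiniteDimensional F ↥K :=
  FiniteDimensional.of_injective (IntermediateField.inclusion h).toLinearMap
    (IntermediateField.inclusion h).injective

theorem aux_separable (K K' : IntermediateField F Ω) (h : K ≤ K')
    [Algebra.IsSeparable F ↥K'] : Algebra.IsSeparable F ↥K := by
  letI : Algebra ↥K ↥K' := (IntermediateField.inclusion h).toAlgebra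
  haveI : IsScalarTower F ↥K ↥K' := IsScalarTower.of_algebraMap_eq fun _ => rfl
  exact Algebra.isSeparable_tower_bot_of_isSeparable F ↥K ↥K'

/-- The intersection of a Galois extension with simple nonabelian Galois group and a Galois
extension with solvable Galois group is trivial. -/
theorem aux_inf_eq_bot (E F₁ : IntermediateField F Ω)
    [FiniteDimensional F E] [IsGalois F E]
    (hsimple : IsSimpleGroup (↥E ≃ₐ[F] ↥E))
    (hnonab : ¬ ∀ x y : (↥E ≃ₐ[F] ↥E), x * y = y * x)
    [FiniteDimensional F F₁] [IsGalois F F₁]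
    (hsolv : IsSolvable (↥F₁ ≃ₐ[F] ↥F₁)) : E ⊓ F₁ = ⊥ := by
  haveI := hsimple
  set K := E ⊓ F₁ with hK
  have hKE : K ≤ E := inf_le_left
  have hKF₁ : K ≤ F₁ := inf_le_right
  haveI : Normal F ↥K := by rw [hK]; infer_instance
  haveI : FiniteDimensional F ↥K := aux_findim K E hKE
  haveI : Algebra.IsSeparable F ↥K := aux_separable K E hKE
  haveI : IsGalois F ↥K := ⟨⟩
  haveI solvK : IsSolvable (↥K ≃ₐ[F] ↥K) :=
    haveI : Group.IsSolvable (↥F₁ ≃ₐ[F] ↥F₁) := hsolv; solvable_of_surjective (auxRes_surjective K F₁ hKF₁)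
  have hsurj : Function.Surjective (auxRes K E hKE) := auxRes_surjective K E hKE
  rcases IsSimpleGroup.eq_bot_or_eq_top_of_normal (auxRes K E hKE).ker inferInstance with hk | hk
  · exfalso
    apply hnonab
    have hinj : Function.Injective (auxRes K E hKE) := (MonoidHom.ker_eq_bot_iff _).mp hk
    haveI : IsSolvable (↥E ≃ₐ[F] ↥E) :=
      haveI : Group.IsSolvable (↥K ≃ₐ[F] ↥K) := solvK; solvable_of_solvable_injective hinj
    exact IsSimpleGroup.comm_iff_isSolvable.mpr this
  · have htriv : ∀ τ : ↥K ≃ₐ[F] ↥K, τ = 1 := by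
      intro τ
      obtain ⟨σ, rfl⟩ := hsurj τ
      have : σ ∈ (auxRes K E hKE).ker := hk ▸ Subgroup.mem_top σ
      exact this
    haveI : Subsingleton (↥K ≃ₐ[F] ↥K) := ⟨fun a b => (htriv a).trans (htriv b).symm⟩
    have hcard : Fintype.card (↥K ≃ₐ[F] ↥K) = 1 := Fintype.card_eq_one_of_forall_eq htriv
    have := IsGalois.card_aut_eq_finrank F ↥K
    rw [Nat.card_eq_fintype_card, hcard] at this
    exact hK ▸ (IntermediateField.finrank_eq_one_iff.mp this.symm)

/-- The compositum `E ⊔ F₁`, viewed over `F₁`, is generated by the roots of a separable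
polynomial over `F₁` which splits in `Ω`. -/
theorem aux_L_eq_adjoin (E F₁ : IntermediateField F Ω) [FiniteDimensional F E] [IsGalois F E] :
    ∃ q : (↥F₁)[X], q.Separable ∧ (q.map (algebraMap ↥F₁ Ω)).Splits ∧
      extendScalars (le_sup_right : F₁ ≤ E ⊔ F₁) = adjoin ↥F₁ (q.rootSet Ω) := by
  obtain ⟨p, hpsep, hpsp⟩ := IsGalois.is_separable_splitting_field F ↥E
  have hpE := (isSplittingField_iff.mp hpsp)
  have hpΩ : (p.map (algebraMap F Ω)).Splits := by
    rw [IsScalarTower.algebraMap_eq F ↥E Ω]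
    rw [← Polynomial.map_map]; exact hpE.1.map _
  refine ⟨p.map (algebraMap F ↥F₁), hpsep.map, ?_, ?_⟩
  · rw [Polynomial.map_map, ← IsScalarTower.algebraMap_eq]
    exact hpΩ
  · have hroot : (p.map (algebraMap F ↥F₁)).rootSet Ω = p.rootSet Ω := by
      unfold Polynomial.rootSet
      rw [Polynomial.aroots_def, Polynomial.aroots_def, Polynomial.map_map,
        ← IsScalarTower.algebraMap_eq]
    apply restrictScalars_injective F
    rw [extendScalars_restrictScalars, restrictScalars_adjoin_eq_sup, hroot, ← hpE.2, sup_comm]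

/-- The natural `F`-linear equivalence between `extendScalars` and the original field. -/
def auxLinEquiv (E F₁ : IntermediateField F Ω) :
    ↥(extendScalars (le_sup_right : F₁ ≤ E ⊔ F₁)) ≃ₗ[F] ↥(E ⊔ F₁) where
  toFun x := ⟨x.1, x.2⟩
  invFun x := ⟨x.1, x.2⟩
  left_inv _ := rfl
  right_inv _ := rfl
  map_add' _ _ := rfl
  map_smul' _ _ := rfl

theorem aux_finrank (E F₁ : IntermediateField F Ω) :
    finrank F ↥F₁ * finrank ↥F₁ ↥(extendScalars (le_sup_right : F₁ ≤ E ⊔ F₁)) =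
      finrank F ↥(E ⊔ F₁) := by
  rw [Module.finrank_mul_finrank F ↥F₁ ↥(extendScalars (le_sup_right : F₁ ≤ E ⊔ F₁))]
  exact (auxLinEquiv E F₁).finrank_eq

/-- The natural inclusion of `E` into the compositum over `F₁`, as an `F`-algebra hom. -/
def auxIncl (E F₁ : IntermediateField F Ω) :
    ↥E →ₐ[F] ↥(extendScalars (le_sup_right : F₁ ≤ E ⊔ F₁)) where
  toFun x := ⟨x.1, (le_sup_left : E ≤ E ⊔ F₁) x.2⟩
  map_one' := rfl
  map_mul' _ _ := rfl
  map_zero' := rfl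
  map_add' _ _ := rfl
  commutes' _ := rfl

/-- The restriction homomorphism `Gal((E⊔F₁)/F₁) →* Gal(E/F)`. -/
noncomputable def auxResL (E F₁ : IntermediateField F Ω) [IsGalois F E] :
    (↥(extendScalars (le_sup_right : F₁ ≤ E ⊔ F₁)) ≃ₐ[↥F₁]
      ↥(extendScalars (le_sup_right : F₁ ≤ E ⊔ F₁))) →* (↥E ≃ₐ[F] ↥E) :=
  letI : Algebra ↥E ↥(extendScalars (le_sup_right : F₁ ≤ E ⊔ F₁)) :=
    (auxIncl E F₁).toRingHom.toAlgebra
  haveI : IsScalarTower F ↥E ↥(extendScalars (le_sup_right : F₁ ≤ E ⊔ F₁)) :=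
    IsScalarTower.of_algebraMap_eq fun _ => rfl
  (AlgEquiv.restrictNormalHom ↥E).comp
    (MonoidHom.mk' (fun σ => σ.restrictScalars F) fun _ _ => rfl)

theorem auxResL_apply (E F₁ : IntermediateField F Ω) [IsGalois F E]
    (σ : ↥(extendScalars (le_sup_right : F₁ ≤ E ⊔ F₁)) ≃ₐ[↥F₁]
      ↥(extendScalars (le_sup_right : F₁ ≤ E ⊔ F₁)))
    (x : Ω) (hx : x ∈ E) (hx' : x ∈ extendScalars (le_sup_right : F₁ ≤ E ⊔ F₁)) :
    (↑(auxResL E F₁ σ ⟨x, hx⟩) : Ω) = ↑(σ ⟨x, hx'⟩) := by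
  letI : Algebra ↥E ↥(extendScalars (le_sup_right : F₁ ≤ E ⊔ F₁)) :=
    (auxIncl E F₁).toRingHom.toAlgebra
  haveI : IsScalarTower F ↥E ↥(extendScalars (le_sup_right : F₁ ≤ E ⊔ F₁)) :=
    IsScalarTower.of_algebraMap_eq fun _ => rfl
  have := AlgEquiv.restrictNormal_commutes (σ.restrictScalars F) ↥E ⟨x, hx⟩
  calc (↑(auxResL E F₁ σ ⟨x, hx⟩) : Ω)
      = ↑(algebraMap ↥E ↥(extendScalars (le_sup_right : F₁ ≤ E ⊔ F₁))
          (((σ.restrictScalars F).restrictNormal ↥E) ⟨x, hx⟩)) := rfl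
    _ = ↑((σ.restrictScalars F) (algebraMap ↥E
          ↥(extendScalars (le_sup_right : F₁ ≤ E ⊔ F₁)) ⟨x, hx⟩)) := congrArg _ this
    _ = ↑(σ ⟨x, hx'⟩) := rfl

/-- An `F₁`-automorphism of the compositum fixing `E` pointwise is the identity. -/
theorem aux_eq_one (E F₁ : IntermediateField F Ω)
    (σ : ↥(extendScalars (le_sup_right : F₁ ≤ E ⊔ F₁)) ≃ₐ[↥F₁]
      ↥(extendScalars (le_sup_right : F₁ ≤ E ⊔ F₁)))
    (hE : ∀ (x : Ω) (hx : x ∈ E) (hx' : x ∈ extendScalars (le_sup_right : F₁ ≤ E ⊔ F₁)),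
      (↑(σ ⟨x, hx'⟩) : Ω) = x) : σ = 1 := by
  have hF₁ : ∀ (y : Ω) (hy : y ∈ F₁) (hy' : y ∈ extendScalars (le_sup_right : F₁ ≤ E ⊔ F₁)),
      (↑(σ ⟨y, hy'⟩) : Ω) = y := by
    intro y hy hy'
    have h1 : (⟨y, hy'⟩ : ↥(extendScalars (le_sup_right : F₁ ≤ E ⊔ F₁))) =
        algebraMap ↥F₁ ↥(extendScalars (le_sup_right : F₁ ≤ E ⊔ F₁)) ⟨y, hy⟩ := rfl
    rw [h1, σ.commutes]
    rfl
  have hsup : E ⊔ F₁ = adjoin F (↑E ∪ ↑F₁) := by rw [adjoin_union, adjoin_self, adjoin_self]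
  have key : ∀ (x : Ω) (hx2 : x ∈ adjoin F (↑E ∪ ↑F₁))
      (hx' : x ∈ extendScalars (le_sup_right : F₁ ≤ E ⊔ F₁)), (↑(σ ⟨x, hx'⟩) : Ω) = x := by
    intro x hx2
    induction hx2 using IntermediateField.adjoin_induction with
    | mem y hy =>
      rcases hy with hy | hy
      · exact hE y hy
      · exact hF₁ y hy
    | algebraMap r =>
      exact hF₁ _ (F₁.algebraMap_mem r)
    | add a b ha hb iha ihb =>
      intro h'
      have haL : a ∈ extendScalars (le_sup_right : F₁ ≤ E ⊔ F₁) := by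
        show a ∈ E ⊔ F₁; rw [hsup]; exact ha
      have hbL : b ∈ extendScalars (le_sup_right : F₁ ≤ E ⊔ F₁) := by
        show b ∈ E ⊔ F₁; rw [hsup]; exact hb
      have h1 : (⟨a + b, h'⟩ : ↥(extendScalars (le_sup_right : F₁ ≤ E ⊔ F₁))) =
          ⟨a, haL⟩ + ⟨b, hbL⟩ := rfl
      rw [h1, map_add]
      push_cast
      rw [iha haL, ihb hbL]
    | inv a ha iha =>
      intro h'
      have haL : a ∈ extendScalars (le_sup_right : F₁ ≤ E ⊔ F₁) := by
        show a ∈ E ⊔ F₁; rw [hsup]; exact ha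
      have h1 : (⟨a⁻¹, h'⟩ : ↥(extendScalars (le_sup_right : F₁ ≤ E ⊔ F₁))) =
          (⟨a, haL⟩)⁻¹ := rfl
      rw [h1, map_inv₀]
      exact congrArg Inv.inv (iha haL)
    | mul a b ha hb iha ihb =>
      intro h'
      have haL : a ∈ extendScalars (le_sup_right : F₁ ≤ E ⊔ F₁) := by
        show a ∈ E ⊔ F₁; rw [hsup]; exact ha
      have hbL : b ∈ extendScalars (le_sup_right : F₁ ≤ E ⊔ F₁) := by
        show b ∈ E ⊔ F₁; rw [hsup]; exact hb
      have h1 : (⟨a * b, h'⟩ : ↥(extendScalars (le_sup_right : F₁ ≤ E ⊔ F₁))) =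
          ⟨a, haL⟩ * ⟨b, hbL⟩ := rfl
      rw [h1, map_mul]
      push_cast
      rw [iha haL, ihb hbL]
  ext ⟨x, hx⟩
  have hx2 : x ∈ adjoin F (↑E ∪ ↑F₁) := by rw [← hsup]; exact hx
  exact key x hx2 hx

end AuxGeneral

/-- Let `E` and `F₁` be intermediate fields of `Ω/F` with `E/F` finite Galois with simple
nonabelian Galois group, and `F₁/F` finite Galois with solvable Galois group. Then `E`
and `F₁` are linearly disjoint over `F`; in particular `E ∩ F₁ = F`, and the restriction
homomorphism from `Gal(E·F₁/F₁)` to `Gal(E/F)` is a group isomorphism. -/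
theorem linearDisjoint_of_simple_nonabelian_galois
    {F Ω : Type*} [Field F] [Field Ω] [Algebra F Ω]
    (E F₁ : IntermediateField F Ω)
    [FiniteDimensional F E] [IsGalois F E]
    (hsimple : IsSimpleGroup (↥E ≃ₐ[F] ↥E))
    (hnonab : ¬ ∀ x y : (↥E ≃ₐ[F] ↥E), x * y = y * x)
    [FiniteDimensional F F₁] [IsGalois F F₁]
    (hsolv : IsSolvable (↥F₁ ≃ₐ[F] ↥F₁)) :
    E.LinearDisjoint F₁ ∧ E ⊓ F₁ = ⊥ ∧
      ∃ res : (↥(IntermediateField.extendScalars (le_sup_right : F₁ ≤ E ⊔ F₁)) ≃ₐ[↥F₁]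
                ↥(IntermediateField.extendScalars (le_sup_right : F₁ ≤ E ⊔ F₁))) →*
              (↥E ≃ₐ[F] ↥E),
        (∀ σ (x : Ω) (hx : x ∈ E)
            (hx' : x ∈ IntermediateField.extendScalars (le_sup_right : F₁ ≤ E ⊔ F₁)),
          (↑(res σ ⟨x, hx⟩) : Ω) = ↑(σ ⟨x, hx'⟩)) ∧
        Function.Bijective res := by
  have hinf : E ⊓ F₁ = ⊥ := aux_inf_eq_bot E F₁ hsimple hnonab hsolv
  -- the compositum is Galois over `F₁`
  obtain ⟨q, hqsep, hqsp, hL⟩ := aux_L_eq_adjoin E F₁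
  haveI hsplit : Polynomial.IsSplittingField ↥F₁
      ↥(IntermediateField.extendScalars (le_sup_right : F₁ ≤ E ⊔ F₁)) q := by
    rw [hL]; exact IntermediateField.adjoin_rootSet_isSplittingField hqsp
  haveI : FiniteDimensional ↥F₁
      ↥(IntermediateField.extendScalars (le_sup_right : F₁ ≤ E ⊔ F₁)) :=
    Polynomial.IsSplittingField.finiteDimensional _ q
  haveI : IsGalois ↥F₁ ↥(IntermediateField.extendScalars (le_sup_right : F₁ ≤ E ⊔ F₁)) :=
    IsGalois.of_separable_splitting_field hqsep
  -- injectivity of the restriction homomorphism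
  have hinj : Function.Injective (auxResL E F₁) := by
    rw [injective_iff_map_eq_one]
    intro σ hσ
    refine aux_eq_one E F₁ σ fun x hx hx' => ?_
    have := auxResL_apply E F₁ σ x hx hx'
    rw [hσ] at this
    exact this.symm
  -- surjectivity of the restriction homomorphism
  have hsurj : Function.Surjective (auxResL E F₁) := by
    set H := (auxResL E F₁).range with hH
    have hfix : IntermediateField.fixedField H = ⊥ := by
      apply eq_bot_iff.mpr
      intro y hy
      have hyL : (↑y : Ω) ∈ IntermediateField.extendScalars (le_sup_right : F₁ ≤ E ⊔ F₁) :=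
        (le_sup_left : E ≤ E ⊔ F₁) y.2
      have hyF₁ : (↑y : Ω) ∈ F₁ := by
        have htopbot : IntermediateField.fixedField (⊤ : Subgroup
            (↥(IntermediateField.extendScalars (le_sup_right : F₁ ≤ E ⊔ F₁)) ≃ₐ[↥F₁]
              ↥(IntermediateField.extendScalars (le_sup_right : F₁ ≤ E ⊔ F₁)))) = ⊥ :=
          OrderIso.map_bot (IsGalois.intermediateFieldEquivSubgroup (F := ↥F₁)
            (E := ↥(IntermediateField.extendScalars (le_sup_right : F₁ ≤ E ⊔ F₁)))).symm
        have hmem : (⟨↑y, hyL⟩ : ↥(IntermediateField.extendScalars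
            (le_sup_right : F₁ ≤ E ⊔ F₁))) ∈ IntermediateField.fixedField (⊤ : Subgroup
            (↥(IntermediateField.extendScalars (le_sup_right : F₁ ≤ E ⊔ F₁)) ≃ₐ[↥F₁]
              ↥(IntermediateField.extendScalars (le_sup_right : F₁ ≤ E ⊔ F₁)))) := by
          intro g
          have h1 : auxResL E F₁ g.1 ∈ H := ⟨g.1, rfl⟩
          have h2 : auxResL E F₁ g.1 y = y := hy ⟨_, h1⟩
          have h3 := auxResL_apply E F₁ g.1 (↑y) y.2 hyL
          apply Subtype.ext
          show (↑(g.1 ⟨↑y, hyL⟩) : Ω) = ↑y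
          rw [← h3]
          exact congrArg _ (by rw [show ((⟨↑y, y.2⟩ : ↥E)) = y from Subtype.ext rfl, h2])
        rw [htopbot] at hmem
        obtain ⟨w, hw⟩ := IntermediateField.mem_bot.mp hmem
        have : (↑w : Ω) = ↑y := congrArg Subtype.val hw
        rw [← this]
        exact w.2
      have hmem2 : (↑y : Ω) ∈ E ⊓ F₁ := ⟨y.2, hyF₁⟩
      rw [hinf] at hmem2
      obtain ⟨r, hr⟩ := IntermediateField.mem_bot.mp hmem2
      exact IntermediateField.mem_bot.mpr ⟨r, Subtype.ext hr⟩
    have hfixing := IntermediateField.fixingSubgroup_fixedField H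
    rw [hfix] at hfixing
    have hbot_top : IntermediateField.fixingSubgroup (⊥ : IntermediateField F ↥E) = ⊤ := by
      apply eq_top_iff.mpr
      intro g _
      intro x
      obtain ⟨r, hr⟩ := IntermediateField.mem_bot.mp x.2
      show g x.1 = x.1
      rw [← hr]
      exact g.commutes r
    rw [hbot_top] at hfixing
    intro τ
    have : τ ∈ H := hfixing ▸ Subgroup.mem_top τ
    exact this
  have hbij : Function.Bijective (auxResL E F₁) := ⟨hinj, hsurj⟩
  -- linear disjointness via degree count
  have hcard : Fintype.card
      (↥(IntermediateField.extendScalars (le_sup_right : F₁ ≤ E ⊔ F₁)) ≃ₐ[↥F₁]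
        ↥(IntermediateField.extendScalars (le_sup_right : F₁ ≤ E ⊔ F₁))) =
      Fintype.card (↥E ≃ₐ[F] ↥E) := Fintype.card_of_bijective hbij
  have hrank : Module.finrank ↥F₁
      ↥(IntermediateField.extendScalars (le_sup_right : F₁ ≤ E ⊔ F₁)) =
      Module.finrank F ↥E := by
    rw [← IsGalois.card_aut_eq_finrank, ← IsGalois.card_aut_eq_finrank]
    exact Nat.card_eq_fintype_card.trans (hcard.trans Nat.card_eq_fintype_card.symm)
  have hfr : Module.finrank F ↥(E ⊔ F₁) = Module.finrank F ↥E * Module.finrank F ↥F₁ := by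
    rw [← aux_finrank E F₁, hrank, mul_comm]
  refine ⟨IntermediateField.LinearDisjoint.of_finrank_sup hfr, hinf,
    auxResL E F₁, fun σ x hx hx' => auxResL_apply E F₁ σ x hx hx', hbij⟩
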